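/- For n ≥ 4, the number of primitive matrices in C_n^{0,0} equals 2^{n−2} − 2^{⌊(n−1)/2⌋}. -/

import Mathlib

def IsPrimitive {n : ℕ} (A : Matrix (Fin n) (Fin n) ℝ) : Prop :=
  (∀ i j, 0 ≤ A i j) ∧ ∃ k : ℕ, 0 < k ∧ ∀ i j, 0 < (A ^ k) i j

def ExpIs {n : ℕ} (A : Matrix (Fin n) (Fin n) ℝ) (e : ℕ) : Prop :=
  IsLeast {k : ℕ | 0 < k ∧ ∀ i j, 0 < (A ^ k) i j} e

/-- A `(0,1)` companion matrix: superdiagonal entries `1` and all other entries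
`0` in the first `n-1` rows; last-row entries in `{0,1}`. -/
def IsCompanion {n : ℕ} (C : Matrix (Fin n) (Fin n) ℝ) : Prop :=
  ∀ i j : Fin n,
    if (i : ℕ) + 1 < n then (C i j = if (j : ℕ) = (i : ℕ) + 1 then 1 else 0)
    else (C i j = 0 ∨ C i j = 1)

/-- The set `C_n^{α,ε}` of symmetric companion matrices `C + Cᵀ` with
`c_{n,1} = α` and `c_{n,n} = ε`. -/
def companionClass (n : ℕ) (hn : 0 < n) (α ε : ℝ) :
    Set (Matrix (Fin n) (Fin n) ℝ) :=
  {A | ∃ C : Matrix (Fin n) (Fin n) ℝ, IsCompanion C ∧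
    C ⟨n - 1, by omega⟩ ⟨0, hn⟩ = α ∧ C ⟨n - 1, by omega⟩ ⟨n - 1, by omega⟩ = ε ∧
    A = C + C.transpose}

/-- `mRun S` : the maximum length of a run of consecutive integers contained in
`S` (`0` for the empty set). -/
noncomputable def mRun (S : Set ℕ) : ℕ := sSup {L : ℕ | ∃ a : ℕ, ∀ t, t < L → a + t ∈ S}

/-- The exponent set of a family of matrices. -/
def expSet {n : ℕ} (X : Set (Matrix (Fin n) (Fin n) ℝ)) : Set ℕ :=
  {e | ∃ A ∈ X, IsPrimitive A ∧ ExpIs A e}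

open Finset Matrix
namespace PSCaux
variable {n : ℕ}

def cmat (n : ℕ) (s : Finset ℕ) : Matrix (Fin n) (Fin n) ℝ :=
  Matrix.of fun i j =>
    if (i : ℕ) + 1 < n then (if (j : ℕ) = (i : ℕ) + 1 then 1 else 0)
    else (if (j : ℕ) ∈ s then 1 else 0)

def amat (n : ℕ) (s : Finset ℕ) : Matrix (Fin n) (Fin n) ℝ :=
  cmat n s + (cmat n s)ᵀ

lemma cmat_nonneg (s : Finset ℕ) (i j : Fin n) : 0 ≤ cmat n s i j := by
  unfold cmat
  simp only [Matrix.of_apply]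
  split_ifs <;> norm_num

lemma amat_nonneg (s : Finset ℕ) (i j : Fin n) : 0 ≤ amat n s i j :=
  add_nonneg (cmat_nonneg s i j) (cmat_nonneg s j i)

lemma amat_symm (s : Finset ℕ) : (amat n s)ᵀ = amat n s := by
  unfold amat
  rw [Matrix.transpose_add, Matrix.transpose_transpose, add_comm]

lemma amat_symm_apply (s : Finset ℕ) (i j : Fin n) : amat n s i j = amat n s j i := by
  conv_lhs => rw [← amat_symm s]
  rfl

lemma amat_step (s : Finset ℕ) (i j : Fin n) (hij : (j : ℕ) = (i : ℕ) + 1) :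
    0 < amat n s i j := by
  have h1 : cmat n s i j = 1 := by
    unfold cmat
    have : (i : ℕ) + 1 < n := hij ▸ j.isLt
    simp [Matrix.of_apply, this, hij]
  have := cmat_nonneg (n := n) s j i
  unfold amat
  simp only [Matrix.add_apply, Matrix.transpose_apply, h1]
  linarith

lemma amat_last (s : Finset ℕ) (j : Fin n) (v : Fin n) (hv : (v : ℕ) = n - 1)
    (hj : (j : ℕ) ∈ s) : 0 < amat n s v j := by
  have h1 : cmat n s v j = 1 := by
    unfold cmat
    have : ¬ ((v : ℕ) + 1 < n) := by have := v.isLt; omega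
    simp [Matrix.of_apply, this, hj]
  have := cmat_nonneg (n := n) s j v
  unfold amat
  simp only [Matrix.add_apply, Matrix.transpose_apply, h1]
  linarith

lemma pow_entry_nonneg (A : Matrix (Fin n) (Fin n) ℝ) (h : ∀ i j, 0 ≤ A i j) :
    ∀ k i j, 0 ≤ (A ^ k) i j := by
  intro k
  induction k with
  | zero => intro i j; simp [Matrix.one_apply]; positivity
  | succ k ih =>
      intro i j
      rw [pow_succ, Matrix.mul_apply]
      exact Finset.sum_nonneg fun l _ => mul_nonneg (ih i l) (h l j)

lemma pow_entry_pos_trans (A : Matrix (Fin n) (Fin n) ℝ) (h : ∀ i j, 0 ≤ A i j)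
    {a b : ℕ} {i l j : Fin n} (ha : 0 < (A ^ a) i l) (hb : 0 < (A ^ b) l j) :
    0 < (A ^ (a + b)) i j := by
  rw [pow_add, Matrix.mul_apply]
  refine lt_of_lt_of_le (mul_pos ha hb) ?_
  refine Finset.single_le_sum (f := fun m => (A ^ a) i m * (A ^ b) m j) ?_ (Finset.mem_univ l)
  intro m _
  exact mul_nonneg (pow_entry_nonneg A h a i m) (pow_entry_nonneg A h b m j)

lemma pow_symm (A : Matrix (Fin n) (Fin n) ℝ) (h : Aᵀ = A) (k : ℕ) {i j : Fin n} :
    (A ^ k) i j = (A ^ k) j i := by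
  have : (A ^ k)ᵀ = A ^ k := by rw [Matrix.transpose_pow, h]
  conv_lhs => rw [← this]
  rfl

/-- walk along the path -/
lemma amat_path (s : Finset ℕ) : ∀ (d : ℕ) (i j : Fin n), (j : ℕ) = (i : ℕ) + d →
    0 < (amat n s ^ d) i j := by
  intro d
  induction d with
  | zero =>
      intro i j hij
      have : i = j := Fin.ext (by omega)
      subst this
      simp [Matrix.one_apply]
  | succ d ih =>
      intro i j hij
      have hlt : (i : ℕ) + 1 < n := by have := j.isLt; omega
      set l : Fin n := ⟨(i : ℕ) + 1, hlt⟩ with hl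
      have h1 : 0 < (amat n s ^ 1) i l := by
        rw [pow_one]; exact amat_step s i l rfl
      have h2 : 0 < (amat n s ^ d) l j := ih l j (by simp [hl]; omega)
      have := pow_entry_pos_trans (amat n s) (amat_nonneg s) h1 h2
      rwa [add_comm 1 d] at this

lemma amat_path' (s : Finset ℕ) (d : ℕ) (i j : Fin n) (hij : (i : ℕ) = (j : ℕ) + d) :
    0 < (amat n s ^ d) i j := by
  rw [pow_symm (amat n s) (amat_symm s)]
  exact amat_path s d j i hij

/-- even closed walks -/
lemma amat_even_loop (s : Finset ℕ) (hn : 2 ≤ n) : ∀ (t : ℕ) (i : Fin n),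
    0 < (amat n s ^ (2 * t)) i i := by
  intro t
  induction t with
  | zero => intro i; simp [Matrix.one_apply]
  | succ t ih =>
      intro i
      have h2 : 0 < (amat n s ^ 2) i i := by
        by_cases hi : (i : ℕ) + 1 < n
        · set l : Fin n := ⟨(i : ℕ) + 1, hi⟩
          have h1 : 0 < (amat n s ^ 1) i l := by rw [pow_one]; exact amat_step s i l rfl
          have h2 : 0 < (amat n s ^ 1) l i := by
            rw [pow_one, amat_symm_apply]; exact amat_step s i l rfl
          have := pow_entry_pos_trans (amat n s) (amat_nonneg s) h1 h2
          simpa using this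
        · have hi1 : 1 ≤ (i : ℕ) := by have := i.isLt; omega
          set l : Fin n := ⟨(i : ℕ) - 1, by omega⟩ with hl
          have hli : (i : ℕ) = (l : ℕ) + 1 := by simp [hl]; omega
          have h1 : 0 < (amat n s ^ 1) i l := by
            rw [pow_one, amat_symm_apply]; exact amat_step s l i hli
          have h2 : 0 < (amat n s ^ 1) l i := by rw [pow_one]; exact amat_step s l i hli
          have := pow_entry_pos_trans (amat n s) (amat_nonneg s) h1 h2
          simpa using this
      have := pow_entry_pos_trans (amat n s) (amat_nonneg s) h2 (ih i)
      have he : 2 * (t + 1) = 2 + 2 * t := by ring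
      rwa [he]

lemma amat_pow_pos (s : Finset ℕ) (hn : 4 ≤ n) (hs : s ⊆ Finset.Ico 1 (n - 1))
    (j0 : ℕ) (hj0 : j0 ∈ s) (hpar : j0 % 2 = (n - 1) % 2) :
    ∀ i j : Fin n, 0 < ((amat n s) ^ (2 * (n - 1) + (n - j0))) i j := by
  have hj0r : 1 ≤ j0 ∧ j0 < n - 1 := by
    have := hs hj0; rw [Finset.mem_Ico] at this; exact this
  set A := amat n s with hA
  set k := 2 * (n - 1) + (n - j0) with hk
  have hv : n - 1 < n := by omega
  set v : Fin n := ⟨n - 1, hv⟩ with hvdef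
  set jf : Fin n := ⟨j0, by omega⟩ with hjf
  -- odd cycle at v of length n - j0
  have hcyc : 0 < (A ^ (n - j0)) v v := by
    have h1 : 0 < (A ^ 1) v jf := by
      rw [pow_one]; exact amat_last s jf v rfl hj0
    have h2 : 0 < (A ^ (n - 1 - j0)) jf v := amat_path s _ jf v (by simp [hjf, hvdef]; omega)
    have := pow_entry_pos_trans A (amat_nonneg s) h1 h2
    have he : 1 + (n - 1 - j0) = n - j0 := by omega
    rwa [he] at this
  intro i j
  have hi := i.isLt
  have hj := j.isLt
  have hd1 : 0 < (A ^ (n - 1 - (i : ℕ))) i v := amat_path s _ i v (by simp [hvdef]; omega)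
  have hd2 : 0 < (A ^ (n - 1 - (j : ℕ))) v j := amat_path' s _ v j (by simp [hvdef]; omega)
  rcases Nat.even_or_odd ((i : ℕ) + (j : ℕ)) with he | ho
  · obtain ⟨t, ht⟩ := he
    have hmid : 0 < (A ^ ((n - j0) + 2 * t)) v v :=
      pow_entry_pos_trans A (amat_nonneg s) hcyc (amat_even_loop s (by omega) t v)
    have := pow_entry_pos_trans A (amat_nonneg s) hd1
      (pow_entry_pos_trans A (amat_nonneg s) hmid hd2)
    have he2 : (n - 1 - (i : ℕ)) + (((n - j0) + 2 * t) + (n - 1 - (j : ℕ))) = k := by omega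
    rwa [he2] at this
  · have ht : ∃ t, (n - j0) + (i : ℕ) + (j : ℕ) = 2 * t := by
      rcases ho with ⟨m, hm⟩; exact ⟨(n - j0 + 1) / 2 + m, by omega⟩
    obtain ⟨t, ht⟩ := ht
    have hmid : 0 < (A ^ (2 * t)) v v := amat_even_loop s (by omega) t v
    have := pow_entry_pos_trans A (amat_nonneg s) hd1
      (pow_entry_pos_trans A (amat_nonneg s) hmid hd2)
    have he2 : (n - 1 - (i : ℕ)) + (2 * t + (n - 1 - (j : ℕ))) = k := by omega
    rwa [he2] at this

lemma amat_entry_parity (s : Finset ℕ) (hs : s ⊆ Finset.Ico 1 (n - 1))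
    (hb : ∀ m ∈ s, m % 2 ≠ (n - 1) % 2) (i j : Fin n) (h : amat n s i j ≠ 0) :
    ((i : ℕ) + (j : ℕ)) % 2 = 1 := by
  have hcm : ∀ a b : Fin n, cmat n s a b ≠ 0 → ((a : ℕ) + (b : ℕ)) % 2 = 1 := by
    intro a b hab
    unfold cmat at hab
    simp only [Matrix.of_apply] at hab
    split_ifs at hab with h1 h2 h3
    · omega
    · exact absurd rfl hab
    · -- last row case, (b : ℕ) ∈ s
      have ha : (a : ℕ) = n - 1 := by have := a.isLt; omega
      have := hb _ h3
      omega
    · exact absurd rfl hab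
  have : cmat n s i j ≠ 0 ∨ cmat n s j i ≠ 0 := by
    by_contra hc
    push_neg at hc
    unfold amat at h
    simp only [Matrix.add_apply, Matrix.transpose_apply, hc.1, hc.2, add_zero] at h
    exact h rfl
  rcases this with h' | h'
  · exact hcm i j h'
  · have := hcm j i h'
    omega

lemma amat_pow_zero (s : Finset ℕ) (hs : s ⊆ Finset.Ico 1 (n - 1))
    (hb : ∀ m ∈ s, m % 2 ≠ (n - 1) % 2) :
    ∀ (k : ℕ) (i j : Fin n), (k + (i : ℕ) + (j : ℕ)) % 2 = 1 → ((amat n s) ^ k) i j = 0 := by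
  intro k
  induction k with
  | zero =>
      intro i j hp
      have : i ≠ j := by intro h; subst h; omega
      simp [Matrix.one_apply, this]
  | succ k ih =>
      intro i j hp
      rw [pow_succ, Matrix.mul_apply]
      refine Finset.sum_eq_zero fun l _ => ?_
      by_cases hl : amat n s l j = 0
      · rw [hl, mul_zero]
      · have hpar := amat_entry_parity s hs hb l j hl
        have : (k + (i : ℕ) + (l : ℕ)) % 2 = 1 := by omega
        rw [ih i l this, zero_mul]

lemma amat_not_primitive (s : Finset ℕ) (hn : 2 ≤ n) (hs : s ⊆ Finset.Ico 1 (n - 1))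
    (hb : ∀ m ∈ s, m % 2 ≠ (n - 1) % 2) :
    ¬ ∃ k : ℕ, 0 < k ∧ ∀ i j : Fin n, 0 < ((amat n s) ^ k) i j := by
  rintro ⟨k, -, hpos⟩
  by_cases hk : k % 2 = 1
  · have := amat_pow_zero s hs hb k ⟨0, by omega⟩ ⟨0, by omega⟩ (by simpa using hk)
    have := hpos ⟨0, by omega⟩ ⟨0, by omega⟩
    linarith
  · have := amat_pow_zero s hs hb k ⟨0, by omega⟩ ⟨1, by omega⟩ (by simp; omega)
    have := hpos ⟨0, by omega⟩ ⟨1, by omega⟩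
    linarith

lemma range_filter_parity : ∀ (m r : ℕ), r < 2 →
    ((Finset.range m).filter (fun j => j % 2 = r)).card = (m + 1 - r) / 2 := by
  intro m
  induction m with
  | zero => intro r hr; interval_cases r <;> simp
  | succ m ih =>
      intro r hr
      rw [Finset.range_add_one, Finset.filter_insert]
      by_cases hm : m % 2 = r
      · rw [if_pos hm, Finset.card_insert_of_notMem (by simp), ih r hr]
        omega
      · rw [if_neg hm, ih r hr]
        omega

lemma card_B (hn : 2 ≤ n) :
    ((Finset.Ico 1 (n - 1)).filter (fun j => ¬ j % 2 = (n - 1) % 2)).card = (n - 1) / 2 := by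
  have hIco : Finset.Ico 1 (n - 1) = (Finset.range (n - 1)).erase 0 := by
    rw [Finset.range_eq_Ico, Finset.Ico_erase_left]; exact Finset.Ico_add_one_left_eq_Ioo 0 (n - 1)
  rw [hIco, Finset.filter_erase]
  by_cases hpar : n % 2 = 0
  · have hp : ∀ j : ℕ, (¬ j % 2 = (n - 1) % 2) ↔ j % 2 = 0 := by intro j; omega
    rw [Finset.filter_congr (fun j _ => by rw [hp j])]
    rw [Finset.card_erase_of_mem (by simp; omega), range_filter_parity (n - 1) 0 (by omega)]
    omega
  · have hp : ∀ j : ℕ, (¬ j % 2 = (n - 1) % 2) ↔ j % 2 = 1 := by intro j; omega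
    rw [Finset.filter_congr (fun j _ => by rw [hp j])]
    rw [Finset.erase_eq_of_notMem (by simp), range_filter_parity (n - 1) 1 (by omega)]
    omega

def Fset (n : ℕ) : Finset (Finset ℕ) :=
  ((Finset.Ico 1 (n - 1)).powerset).filter (fun s => ∃ j ∈ s, j % 2 = (n - 1) % 2)

lemma card_Fset (hn : 4 ≤ n) : (Fset n).card = 2 ^ (n - 2) - 2 ^ ((n - 1) / 2) := by
  classical
  set P := Finset.Ico 1 (n - 1) with hP
  set B := P.filter (fun j => ¬ j % 2 = (n - 1) % 2) with hB
  have hsplit := Finset.card_filter_add_card_filter_not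
    (s := P.powerset) (p := fun s => ∃ j ∈ s, j % 2 = (n - 1) % 2)
  have hneg : P.powerset.filter (fun s => ¬ ∃ j ∈ s, j % 2 = (n - 1) % 2) = B.powerset := by
    ext s
    simp only [Finset.mem_filter, Finset.mem_powerset, hB]
    constructor
    · rintro ⟨hsP, hne⟩
      push_neg at hne
      intro j hj
      exact Finset.mem_filter.2 ⟨hsP hj, hne j hj⟩
    · intro hsB
      refine ⟨fun j hj => (Finset.mem_filter.1 (hsB hj)).1, ?_⟩
      push_neg
      intro j hj
      exact (Finset.mem_filter.1 (hsB hj)).2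
  have hPcard : P.card = n - 2 := by rw [hP, Nat.card_Ico]; omega
  have hBcard : B.card = (n - 1) / 2 := card_B (by omega)
  have h1 : (Fset n).card + 2 ^ ((n - 1) / 2) = 2 ^ (n - 2) := by
    have := hsplit
    rw [hneg, Finset.card_powerset, Finset.card_powerset, hPcard, hBcard] at this
    exact this
  have hle : 2 ^ ((n - 1) / 2) ≤ 2 ^ (n - 2) := Nat.pow_le_pow_right (by norm_num) (by omega)
  omega


lemma amat_injOn (hn : 2 ≤ n) {s t : Finset ℕ} (hs : s ⊆ Finset.Ico 1 (n - 1))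
    (ht : t ⊆ Finset.Ico 1 (n - 1)) (h : amat n s = amat n t) : s = t := by
  ext j
  by_cases hj : j ∈ Finset.Ico 1 (n - 1)
  · have hj' := Finset.mem_Ico.1 hj
    set v : Fin n := ⟨n - 1, by omega⟩ with hv
    set jf : Fin n := ⟨j, by omega⟩ with hjf
    have heq := congrFun (congrFun h v) jf
    unfold amat cmat at heq
    have hv1 : ¬((v : ℕ) + 1 < n) := by simp [hv]; omega
    have hj1 : (jf : ℕ) + 1 < n := by simp [hjf]; omega
    simp only [Matrix.add_apply, Matrix.transpose_apply, Matrix.of_apply, hv1, hj1,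
      if_false, if_true] at heq
    by_cases hjs : j ∈ s <;> by_cases hjt : j ∈ t <;>
      simp [hjs, hjt, hjf] at heq ⊢ <;> assumption
  · exact iff_of_false (fun h' => hj (hs h')) (fun h' => hj (ht h'))

lemma isCompanion_cmat (s : Finset ℕ) : IsCompanion (cmat n s) := by
  intro i j
  unfold cmat
  by_cases hi : (i : ℕ) + 1 < n
  · simp [hi]
  · simp only [Matrix.of_apply, hi, if_false]
    by_cases hjs : (j : ℕ) ∈ s <;> simp [hjs]

lemma amat_mem_class (hn : 4 ≤ n) {s : Finset ℕ} (hs : s ⊆ Finset.Ico 1 (n - 1)) :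
    amat n s ∈ companionClass n (by linarith) 0 0 := by
  refine ⟨cmat n s, isCompanion_cmat s, ?_, ?_, rfl⟩
  · unfold cmat
    have h1 : ¬((n - 1) + 1 < n) := by omega
    have h0 : (0 : ℕ) ∉ s := fun h => by have := Finset.mem_Ico.1 (hs h); omega
    simp [Matrix.of_apply, h1, h0]
  · unfold cmat
    have h1 : ¬((n - 1) + 1 < n) := by omega
    have h0 : (n - 1 : ℕ) ∉ s := fun h => by have := Finset.mem_Ico.1 (hs h); omega
    simp [Matrix.of_apply, h1, h0]

lemma amat_isPrimitive (hn : 4 ≤ n) {s : Finset ℕ} (hs : s ⊆ Finset.Ico 1 (n - 1))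
    (hex : ∃ j ∈ s, j % 2 = (n - 1) % 2) : _root_.IsPrimitive (amat n s) := by
  obtain ⟨j0, hj0, hpar⟩ := hex
  refine ⟨amat_nonneg s, 2 * (n - 1) + (n - j0), ?_, amat_pow_pos s hn hs j0 hj0 hpar⟩
  omega

/-- The set of primitive matrices in the class is the image of `Fset n`. -/
lemma class_eq_image (hn : 4 ≤ n) :
    {A ∈ companionClass n (by linarith) 0 0 | _root_.IsPrimitive A} =
      ↑((Fset n).image (amat n)) := by
  ext A
  simp only [Set.mem_setOf_eq, Finset.coe_image, Set.mem_image, Finset.mem_coe]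
  constructor
  · rintro ⟨⟨C, hC, h0, hnn, hA⟩, hprim⟩
    classical
    set v : Fin n := ⟨n - 1, by omega⟩ with hv
    set s : Finset ℕ := (Finset.univ.filter (fun j : Fin n => C v j = 1)).image Fin.val
      with hsdef
    have hmem : ∀ j : Fin n, ((j : ℕ) ∈ s ↔ C v j = 1) := by
      intro j
      simp only [hsdef, Finset.mem_image, Finset.mem_filter, Finset.mem_univ, true_and]
      constructor
      · rintro ⟨j', hj', hval⟩
        rwa [Fin.val_injective hval] at hj'
      · intro hj; exact ⟨j, hj, rfl⟩
    have hssub : s ⊆ Finset.Ico 1 (n - 1) := by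
      intro j hj
      simp only [hsdef, Finset.mem_image, Finset.mem_filter, Finset.mem_univ, true_and] at hj
      obtain ⟨j', hj', hval⟩ := hj
      have hne0 : (j' : ℕ) ≠ 0 := by
        intro hh
        have heq0 : j' = ⟨0, by omega⟩ := Fin.ext hh
        rw [heq0, h0] at hj'
        norm_num at hj'
      have hnen : (j' : ℕ) ≠ n - 1 := by
        intro hh
        have heqn : j' = ⟨n - 1, by omega⟩ := Fin.ext hh
        rw [heqn, hnn] at hj'
        norm_num at hj'
      have := j'.isLt
      rw [Finset.mem_Ico]
      omega
    have hCeq : C = cmat n s := by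
      ext i j
      have hCij := hC i j
      by_cases hi : (i : ℕ) + 1 < n
      · rw [if_pos hi] at hCij
        unfold cmat
        simp only [Matrix.of_apply, hi, if_true]
        exact hCij
      · have hieq : i = v := Fin.ext (by have := i.isLt; simp [hv]; omega)
        subst hieq
        unfold cmat
        simp only [Matrix.of_apply, hi, if_false]
        rw [if_neg hi] at hCij
        by_cases hjs : (j : ℕ) ∈ s
        · rw [if_pos hjs]; exact (hmem j).1 hjs
        · rw [if_neg hjs]
          rcases hCij with hc | hc
          · exact hc
          · exact absurd ((hmem j).2 hc) hjs
    have hAeq : A = amat n s := by rw [hA, hCeq]; rfl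
    refine ⟨s, ?_, hAeq.symm⟩
    rw [Fset, Finset.mem_filter, Finset.mem_powerset]
    refine ⟨hssub, ?_⟩
    by_contra hne
    push_neg at hne
    have hnp := amat_not_primitive s (by omega) hssub hne
    rw [hAeq] at hprim
    exact hnp hprim.2
  · rintro ⟨s, hsF, rfl⟩
    rw [Fset, Finset.mem_filter, Finset.mem_powerset] at hsF
    exact ⟨amat_mem_class hn hsF.1, amat_isPrimitive hn hsF.1 hsF.2⟩

end PSCaux

/-- For `n ≥ 4`, `|PSC_n^{0,0}| = 2^(n-2) - 2^(⌊(n-1)/2⌋)`. -/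
theorem card_PSC_zero_zero {n : ℕ} (hn : 4 ≤ n) :
    Set.ncard {A ∈ companionClass n (by omega) 0 0 | _root_.IsPrimitive A} =
      2 ^ (n - 2) - 2 ^ ((n - 1) / 2) := by
  rw [PSCaux.class_eq_image hn, Set.ncard_coe_finset]
  rw [Finset.card_image_of_injOn, PSCaux.card_Fset hn]
  intro s hsmem t htmem h
  rw [PSCaux.Fset, Finset.coe_filter, Set.mem_setOf_eq, Finset.mem_powerset] at hsmem htmem
  exact PSCaux.amat_injOn (by omega) hsmem.1 htmem.1 h
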